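/- Let G^s be a finite simple symmetric tree (an undirected tree with all edge weights b(x,y) = b(y,x) = 1 on its edges and vertex weight m ≡ 1), and let 2q = max_{x∈V} v(x) be its maximal valency. Then the increasingly ordered eigenvalues of S_{G^s} satisfy λ_k(S_{G^s}) ≤ 2 for every k = 1,…,q, and λ_{q+1}(S_{G^s}) ≤ 2(q+1). -/

import Mathlib

open Finset

/-- The weighted inner product `(f,g)_m = ∑_x m(x) f(x) conj(g(x))` on functions `W → ℂ`. -/
noncomputable def innerM {W : Type*} [Fintype W] (m : W → ℝ) (f g : W → ℂ) : ℂ :=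
  ∑ x, (m x : ℂ) * f x * (starRingEnd ℂ) (g x)

/-- The self-adjoint operator `S f(x) = (1/m(x)) ∑_y a(x,y) (f(x) - f(y))`, where
`a(x,y) = b(x,y) + b(y,x)`. -/
noncomputable def opS {W : Type*} [Fintype W] (m : W → ℝ) (b : W → W → ℝ)
    (f : W → ℂ) (x : W) : ℂ :=
  (1 / (m x : ℂ)) * ∑ y, ((b x y + b y x : ℝ) : ℂ) * (f x - f y)

/-- `μ : Fin N → ℝ` lists, increasingly and with multiplicity, eigenvalues of the operator
`S` which is self-adjoint for the weighted inner product with weight `m`: `μ` is monotone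
and there is a corresponding `m`-orthonormal family of eigenfunctions.  When
`N = dim = card W`, such a family is an orthonormal basis, so `μ` is exactly the increasing
enumeration `λ_1 ≤ … ≤ λ_N` of the eigenvalues of `S` with multiplicity. -/
def IsMonoEigenListing {W : Type*} [Fintype W] (m : W → ℝ)
    (S : (W → ℂ) → (W → ℂ)) {N : ℕ} (μ : Fin N → ℝ) : Prop :=
  Monotone μ ∧ ∃ u : Fin N → (W → ℂ),
    (∀ i j, innerM m (u i) (u j) = if i = j then 1 else 0) ∧
    ∀ i, S (u i) = fun x => ((μ i : ℝ) : ℂ) * u i x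

/-- `x` and `y` are neighbours in the directed weighted graph with edge weight `b`. -/
def Nbr {V : Type*} (b : V → V → ℝ) (x y : V) : Prop := 0 < b x y ∨ 0 < b y x

/-- Kirchhoff assumption: `β⁺(x) = β⁻(x)` for all `x`. -/
def Kirchhoff {V : Type*} [Fintype V] (b : V → V → ℝ) : Prop :=
  ∀ x, ∑ y, b x y = ∑ y, b y x

/-- The graph with edge weight `b` is connected, ignoring orientation. -/
def ConnectedGraph {V : Type*} (b : V → V → ℝ) : Prop :=
  ∀ x y : V, Relation.ReflTransGen (Nbr b) x y

/-- The subgraph of `b` induced on `U` is connected, ignoring orientation. -/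
def ConnOn {V : Type*} (b : V → V → ℝ) (U : Finset V) : Prop :=
  ∀ x ∈ U, ∀ y ∈ U,
    Relation.ReflTransGen (fun u v => u ∈ U ∧ v ∈ U ∧ Nbr b u v) x y

/-- The interior of a set of vertices: those of its vertices all of whose neighbours lie
in the set. -/
def interiorSet {V : Type*} (b : V → V → ℝ) (Ω : Set V) : Set V :=
  {x | x ∈ Ω ∧ ∀ y, Nbr b x y → y ∈ Ω}

/-- The operator `S_H` of the subgraph induced on `U` (weights restricted from the ambient
graph), acting on functions `↥U → ℂ`. -/
noncomputable def opSsub {V : Type*} [Fintype V] (m : V → ℝ) (b : V → V → ℝ)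
    (U : Finset V) : (↥U → ℂ) → (↥U → ℂ) :=
  opS (fun x : ↥U => m ↑x) (fun x y : ↥U => b ↑x ↑y)

/-- The Dirichlet operator `S^D_U`, acting on functions supported in `U` (identified with
functions `↥U → ℂ`, extended by zero): `S^D_U f(x) = (1/m(x)) ∑_{y ∈ V} a(x,y)(f(x)-f(y))`
for `x ∈ U`. -/
noncomputable def opSDir {V : Type*} [Fintype V] [DecidableEq V] (m : V → ℝ) (b : V → V → ℝ)
    (U : Finset V) (f : ↥U → ℂ) (x : ↥U) : ℂ :=
  (1 / (m ↑x : ℂ)) * ∑ y : V, ((b ↑x y + b y ↑x : ℝ) : ℂ) *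
    (f x - (if h : y ∈ U then f ⟨y, h⟩ else 0))

/-- The Dirichlet Laplacian `Δ^D_U`, acting on functions supported in `U`:
`Δ^D_U f(x) = (1/m(x)) ∑_{y ∈ V} b(x,y)(f(x)-f(y))` for `x ∈ U`. -/
noncomputable def opDeltaDir {V : Type*} [Fintype V] [DecidableEq V] (m : V → ℝ) (b : V → V → ℝ)
    (U : Finset V) (f : ↥U → ℂ) (x : ↥U) : ℂ :=
  (1 / (m ↑x : ℂ)) * ∑ y : V, ((b ↑x y : ℝ) : ℂ) *
    (f x - (if h : y ∈ U then f ⟨y, h⟩ else 0))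

set_option maxHeartbeats 1000000 in
lemma spectral_bound {V : Type*} [Fintype V] [DecidableEq V] {n : ℕ}
    (hn : n = Fintype.card V)
    (S : (V → ℂ) → (V → ℂ)) (hlin : IsLinearMap ℂ S) (μ : Fin n → ℝ)
    (hμ : IsMonoEigenListing (fun _ : V => (1:ℝ)) S μ)
    (F : Finset V) (dd : V → ℝ) (c0 : ℝ)
    (hdd : ∀ x ∈ F, dd x ≤ c0)
    (hS : ∀ f : V → ℂ, (∀ x, x ∉ F → f x = 0) → ∀ x ∈ F, S f x = ((dd x : ℝ) : ℂ) * f x) :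
    ∀ k : Fin n, (k : ℕ) < F.card → μ k ≤ c0 := by
  classical
  obtain ⟨hmono, u, horth, heig⟩ := hμ
  intro k hk
  haveI : Nonempty (Fin n) := ⟨k⟩
  -- move to EuclideanSpace
  set E := EuclideanSpace ℂ V with hE
  set v : Fin n → E := fun i => (WithLp.equiv 2 (V → ℂ)).symm (u i) with hv
  have hinner : ∀ f g : V → ℂ,
      (inner ℂ ((WithLp.equiv 2 (V → ℂ)).symm f) ((WithLp.equiv 2 (V → ℂ)).symm g) : ℂ)
        = ∑ x, (starRingEnd ℂ) (f x) * g x := by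
    intro f g
    rw [PiLp.inner_apply]
    simp [RCLike.inner_apply]
    exact Finset.sum_congr rfl fun x _ => mul_comm _ _
  have honv : Orthonormal ℂ v := by
    rw [orthonormal_iff_ite]
    intro i j
    rw [hv]
    simp only
    rw [hinner]
    have := horth j i
    simp only [innerM, Complex.ofReal_one, one_mul] at this
    rw [show (∑ x, (starRingEnd ℂ) (u i x) * u j x) = ∑ x, u j x * (starRingEnd ℂ) (u i x) by
      exact Finset.sum_congr rfl fun x _ => mul_comm _ _]
    rw [this]
    by_cases h : i = j <;> simp [h, eq_comm]
  have hcard : Fintype.card (Fin n) = Module.finrank ℂ E := by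
    show Fintype.card (Fin n) = Module.finrank ℂ (EuclideanSpace ℂ V)
    rw [finrank_euclideanSpace, Fintype.card_fin, hn]
  let B : OrthonormalBasis (Fin n) ℂ E :=
    (basisOfOrthonormalOfCardEqFinrank honv hcard).toOrthonormalBasis
      (by rwa [coe_basisOfOrthonormalOfCardEqFinrank])
  have hB : ⇑B = v := by
    simp [B, Module.Basis.coe_toOrthonormalBasis, coe_basisOfOrthonormalOfCardEqFinrank]
  -- find a nonzero test function supported on F, orthogonal to the first k eigenfunctions
  set K := (k : ℕ) with hK
  let Φ : (↥F → ℂ) →ₗ[ℂ] (Fin K → ℂ) := LinearMap.pi (fun i =>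
    { toFun := fun g => ∑ x : ↥F, (starRingEnd ℂ) (u ⟨i.1, i.2.trans k.2⟩ ↑x) * g x
      map_add' := by
        intro a b
        rw [← Finset.sum_add_distrib]
        exact Finset.sum_congr rfl fun x _ => by simp [Pi.add_apply]; ring
      map_smul' := by
        intro c a
        simp only [Pi.smul_apply, smul_eq_mul, RingHom.id_apply, Finset.mul_sum]
        exact Finset.sum_congr rfl fun x _ => by ring })
  have hker : LinearMap.ker Φ ≠ ⊥ := by
    apply LinearMap.ker_ne_bot_of_finrank_lt
    rw [Module.finrank_fintype_fun_eq_card, Module.finrank_fintype_fun_eq_card,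
      Fintype.card_fin, Fintype.card_coe]
    exact hk
  obtain ⟨g, hgker, hgne⟩ := (Submodule.ne_bot_iff _).mp hker
  set f : V → ℂ := fun x => if h : x ∈ F then g ⟨x, h⟩ else 0 with hf
  have hsupp : ∀ x ∉ F, f x = 0 := by
    intro x hx; simp [hf, hx]
  have hfne : f ≠ 0 := by
    intro h
    apply hgne
    funext x
    have := congrFun h (x : V)
    simpa [hf, x.2] using this
  have hsum_subtype : ∀ w : V → ℂ, ∑ x, w x * f x = ∑ x : ↥F, w ↑x * g x := by
    intro w
    rw [← Finset.sum_subset (Finset.subset_univ F)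
      (fun x _ hx => by rw [hsupp x hx, mul_zero]),
      ← Finset.sum_attach F (fun x => w x * f x)]
    refine Finset.sum_congr rfl fun x _ => ?_
    rw [hf]
    simp [x.2]
  -- coefficients
  set fE : E := (WithLp.equiv 2 (V → ℂ)).symm f with hfE
  set c : Fin n → ℂ := fun i => B.repr fE i with hc
  have hcip : ∀ i, c i = ∑ x, (starRingEnd ℂ) (u i x) * f x := by
    intro i
    rw [hc]
    simp only
    rw [B.repr_apply_apply, hB, hv]
    exact hinner (u i) f
  have hczero : ∀ i : Fin n, (i : ℕ) < K → c i = 0 := by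
    intro i hi
    have h0 : Φ g = 0 := LinearMap.mem_ker.mp hgker
    have h1 := congrFun h0 ⟨i.1, hi⟩
    simp only [Φ, LinearMap.pi_apply, LinearMap.coe_mk, AddHom.coe_mk, Pi.zero_apply] at h1
    rw [hcip i, hsum_subtype (fun x => (starRingEnd ℂ) (u i x))]
    have : (⟨i.1, (Fin.mk i.1 hi).2.trans k.2⟩ : Fin n) = i := Fin.ext rfl
    rwa [this] at h1
  have h1 : fE = ∑ i, c i • v i := by
    have := (B.sum_repr fE).symm
    rwa [hB] at this
  have hexp : f = ∑ i, c i • u i := by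
    funext x
    have := congrArg (fun w : EuclideanSpace ℂ V => w x) h1
    simp [hfE, hv] at this
    erw [WithLp.ofLp_sum] at this
    rw [this]; simp only [Finset.sum_apply]; rfl
  have hSf : S f = ∑ i, (c i * ((μ i : ℝ) : ℂ)) • u i := by
    conv_lhs => rw [hexp, show S = ⇑(IsLinearMap.mk' S hlin) from rfl]
    rw [map_sum]
    refine Finset.sum_congr rfl fun i _ => ?_
    rw [LinearMap.map_smul, IsLinearMap.mk'_apply, heig i]
    funext x
    simp only [Pi.smul_apply, smul_eq_mul]
    ring
  have hw : (WithLp.equiv 2 (V → ℂ)).symm (S f) = ∑ i, (c i * ((μ i : ℝ) : ℂ)) • v i := by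
    rw [hSf]; ext x; simp [hv]
    erw [WithLp.ofLp_sum]; rw [Finset.sum_apply]; exact Finset.sum_congr rfl fun i _ => rfl
  have hspecC : (∑ x, (starRingEnd ℂ) (f x) * S f x)
      = ∑ i, ((μ i : ℝ) : ℂ) * ((‖c i‖ ^ 2 : ℝ) : ℂ) := by
    rw [← hinner f (S f), ← hfE, hw, h1, sum_inner]
    refine Finset.sum_congr rfl fun j _ => ?_
    rw [inner_smul_left, honv.inner_right_fintype]
    rw [show (starRingEnd ℂ) (c j) * (c j * ((μ j : ℝ) : ℂ))
      = ((μ j : ℝ) : ℂ) * ((starRingEnd ℂ) (c j) * c j) by ring, RCLike.conj_mul]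
    push_cast
    norm_num
  have hnormC : (∑ x, (starRingEnd ℂ) (f x) * f x) = ∑ i, ((‖c i‖ ^ 2 : ℝ) : ℂ) := by
    rw [← hinner f f, ← hfE, h1, sum_inner]
    refine Finset.sum_congr rfl fun j _ => ?_
    rw [inner_smul_left, honv.inner_right_fintype, RCLike.conj_mul]
    push_cast
    norm_num
  have htestC : (∑ x, (starRingEnd ℂ) (f x) * S f x)
      = ∑ x ∈ F, ((dd x : ℝ) : ℂ) * ((‖f x‖ ^ 2 : ℝ) : ℂ) := by
    rw [← Finset.sum_subset (Finset.subset_univ F)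
      (fun x _ hx => by rw [hsupp x hx, map_zero, zero_mul])]
    refine Finset.sum_congr rfl fun x hx => ?_
    rw [hS f hsupp x hx, show (starRingEnd ℂ) (f x) * (((dd x : ℝ) : ℂ) * f x)
      = ((dd x : ℝ) : ℂ) * ((starRingEnd ℂ) (f x) * f x) by ring, RCLike.conj_mul]
    push_cast
    norm_num
  have hnormF : (∑ x, (starRingEnd ℂ) (f x) * f x) = ∑ x ∈ F, ((‖f x‖ ^ 2 : ℝ) : ℂ) := by
    rw [← Finset.sum_subset (Finset.subset_univ F)
      (fun x _ hx => by rw [hsupp x hx, map_zero, zero_mul])]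
    refine Finset.sum_congr rfl fun x hx => ?_
    rw [RCLike.conj_mul]
    push_cast
    norm_num
  -- pass to real equalities
  have hspecR : (∑ i, μ i * ‖c i‖ ^ 2) = ∑ x ∈ F, dd x * ‖f x‖ ^ 2 := by
    have := hspecC.symm.trans htestC
    push_cast at this
    exact_mod_cast this
  have hnormR : (∑ i, ‖c i‖ ^ 2) = ∑ x ∈ F, ‖f x‖ ^ 2 := by
    have := hnormC.symm.trans hnormF
    exact_mod_cast this
  -- positivity of the norm
  have hpos : 0 < ∑ i, ‖c i‖ ^ 2 := by
    rw [hnormR]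
    obtain ⟨x, hx⟩ : ∃ x, f x ≠ 0 := by
      by_contra h
      push_neg at h
      exact hfne (funext h)
    have hxF : x ∈ F := by
      by_contra hxF
      exact hx (hsupp x hxF)
    exact Finset.sum_pos' (fun y _ => by positivity)
      ⟨x, hxF, pow_pos (norm_pos_iff.mpr hx) 2⟩
  -- monotonicity bound
  have hlow : μ k * ∑ i, ‖c i‖ ^ 2 ≤ ∑ i, μ i * ‖c i‖ ^ 2 := by
    rw [Finset.mul_sum]
    refine Finset.sum_le_sum fun i _ => ?_
    by_cases hi : (i : ℕ) < K
    · rw [hczero i hi]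
      simp
    · push_neg at hi
      have : k ≤ i := by rw [hK] at hi; exact Fin.le_def.mpr hi
      have := hmono this
      nlinarith [sq_nonneg ‖c i‖]
  have hup : (∑ x ∈ F, dd x * ‖f x‖ ^ 2) ≤ c0 * ∑ i, ‖c i‖ ^ 2 := by
    rw [hnormR, Finset.mul_sum]
    refine Finset.sum_le_sum fun x hx => ?_
    have := hdd x hx
    nlinarith [sq_nonneg ‖f x‖]
  have : μ k * ∑ i, ‖c i‖ ^ 2 ≤ c0 * ∑ i, ‖c i‖ ^ 2 := by
    calc μ k * ∑ i, ‖c i‖ ^ 2 ≤ ∑ i, μ i * ‖c i‖ ^ 2 := hlow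
    _ = ∑ x ∈ F, dd x * ‖f x‖ ^ 2 := hspecR
    _ ≤ c0 * ∑ i, ‖c i‖ ^ 2 := hup
  exact le_of_mul_le_mul_right (by linarith [this]) hpos

lemma opS_linear {V : Type*} [Fintype V] (m : V → ℝ) (b : V → V → ℝ) :
    IsLinearMap ℂ (opS m b) := by
  constructor
  · intro f g
    funext x
    simp only [opS, Pi.add_apply]
    rw [← mul_add, ← Finset.sum_add_distrib]
    congr 1
    exact Finset.sum_congr rfl fun y _ => by ring
  · intro c f
    funext x
    simp only [opS, Pi.smul_apply, smul_eq_mul]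
    rw [show ∑ y, ((b x y + b y x : ℝ) : ℂ) * (c * f x - c * f y)
        = c * ∑ y, ((b x y + b y x : ℝ) : ℂ) * (f x - f y) by
      rw [Finset.mul_sum]; exact Finset.sum_congr rfl fun y _ => by ring]
    ring

lemma test_formula {V : Type*} [Fintype V] [DecidableEq V] (G : SimpleGraph V)
    [DecidableRel G.Adj] (F : Finset V) (hF : ∀ x ∈ F, ∀ y, G.Adj x y → y ∉ F)
    (f : V → ℂ) (hsupp : ∀ x ∉ F, f x = 0) (x : V) (hx : x ∈ F) :
    opS (fun _ : V => (1 : ℝ)) (fun x y : V => if G.Adj x y then (1 : ℝ) else 0) f x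
      = ((2 * (G.degree x : ℝ) : ℝ) : ℂ) * f x := by
  unfold opS
  have h1 : ∀ y : V, ((((if G.Adj x y then (1:ℝ) else 0) + (if G.Adj y x then (1:ℝ) else 0)) : ℝ) : ℂ)
        * (f x - f y) = if y ∈ G.neighborFinset x then 2 * f x else 0 := by
    intro y
    by_cases h : G.Adj x y
    · have hyF : y ∉ F := hF x hx y h
      rw [hsupp y hyF, if_pos h, if_pos h.symm,
        if_pos ((SimpleGraph.mem_neighborFinset G x y).mpr h)]
      push_cast
      ring
    · have h' : ¬ G.Adj y x := fun hc => h hc.symm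
      rw [if_neg h, if_neg h',
        if_neg (fun hc => h ((SimpleGraph.mem_neighborFinset G x y).mp hc))]
      push_cast
      ring
  rw [Finset.sum_congr rfl fun y _ => h1 y, Finset.sum_ite_mem, Finset.univ_inter,
    Finset.sum_const]
  rw [show (G.neighborFinset x).card = G.degree x from rfl]
  push_cast
  rw [nsmul_eq_mul]
  push_cast
  ring


-- ====== auxiliary lemmas for the proof ======

lemma aux_deg_one_unique {V : Type*} [Fintype V] [DecidableEq V] (G : SimpleGraph V)
    [DecidableRel G.Adj] {x y z : V} (hx : G.degree x = 1) (hy : G.Adj x y) (hz : G.Adj x z) :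
    y = z :=
  Finset.card_le_one.mp (le_of_eq hx) y (by simpa using hy) z (by simpa using hz)

lemma aux_walk_trap {V : Type*} [Fintype V] [DecidableEq V] (G : SimpleGraph V)
    [DecidableRel G.Adj] {x y : V} (hx : G.degree x = 1) (hy : G.degree y = 1)
    (hxy : G.Adj x y) : ∀ {u z : V} (_ : G.Walk u z), u = x ∨ u = y → z = x ∨ z = y := by
  intro u z w
  induction w with
  | nil => exact fun h => h
  | cons h p ih =>
    intro hu
    apply ih
    rcases hu with rfl | rfl
    · right; exact aux_deg_one_unique G hx h hxy
    · left; exact aux_deg_one_unique G hy h hxy.symm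

lemma aux_degree_pos {V : Type*} [Fintype V] [DecidableEq V] (G : SimpleGraph V)
    [DecidableRel G.Adj] (hconn : G.Connected) (hcard : 2 ≤ Fintype.card V) (x : V) :
    1 ≤ G.degree x := by
  obtain ⟨y, hy⟩ := Fintype.exists_ne_of_one_lt_card (by omega) x
  obtain ⟨w⟩ := hconn.preconnected x y
  cases w with
  | nil => exact absurd rfl hy.symm
  | cons h p => exact (G.degree_pos_iff_exists_adj x).mpr ⟨_, h⟩

lemma aux_leaf_count {V : Type*} [Fintype V] [DecidableEq V] (G : SimpleGraph V)
    [DecidableRel G.Adj] (htree : G.IsTree) {q : ℕ} (hq1 : 1 ≤ q)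
    (hq : 2 * q = Finset.univ.sup (fun x => G.degree x)) :
    2 * q ≤ (univ.filter (fun x => G.degree x = 1)).card := by
  have hVne : (univ : Finset V).Nonempty := by
    by_contra h
    simp [Finset.not_nonempty_iff_eq_empty] at h
    rw [h] at hq
    simp at hq
    omega
  obtain ⟨x₀, -, hx₀⟩ := Finset.exists_mem_eq_sup univ hVne (fun x => G.degree x)
  rw [← hq] at hx₀
  have hdx₀ : G.degree x₀ = 2 * q := hx₀.symm
  have hcard2 : 2 ≤ Fintype.card V := by
    have : 0 < G.degree x₀ := by omega
    obtain ⟨y, hy⟩ := (G.degree_pos_iff_exists_adj x₀).mp this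
    have : x₀ ≠ y := G.ne_of_adj hy
    have := Fintype.one_lt_card_iff.mpr ⟨x₀, y, this⟩
    omega
  set A := univ.filter (fun x => G.degree x = 1) with hA
  have hx₀A : x₀ ∉ A := by
    simp [hA]
    omega
  have hsum : ∑ v, G.degree v = 2 * (Fintype.card V - 1) := by
    have h1 := htree.card_edgeFinset
    rw [G.sum_degrees_eq_twice_card_edges]
    omega
  have hsplit : ∑ v, G.degree v = G.degree x₀ + ∑ v ∈ univ.erase x₀, G.degree v :=
    (Finset.add_sum_erase univ _ (mem_univ x₀)).symm
  have hlb : ∑ v ∈ univ.erase x₀, (if G.degree v = 1 then 1 else 2) ≤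
      ∑ v ∈ univ.erase x₀, G.degree v := by
    apply Finset.sum_le_sum
    intro v hv
    have h1 : 1 ≤ G.degree v := aux_degree_pos G htree.isConnected hcard2 v
    split <;> omega
  have hsplit2 : ∑ v ∈ univ.erase x₀, (if G.degree v = 1 then 1 else 2) =
      ((univ.erase x₀).filter (fun v => G.degree v = 1)).card * 1 +
      ((univ.erase x₀).filter (fun v => ¬ G.degree v = 1)).card * 2 := by
    rw [Finset.sum_ite, Finset.sum_const, Finset.sum_const]
    simp [mul_comm]
  have hAeq : (univ.erase x₀).filter (fun v => G.degree v = 1) = A := by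
    ext v
    simp only [hA, Finset.mem_filter, Finset.mem_erase, Finset.mem_univ, true_and, and_true]
    constructor
    · tauto
    · intro h; refine ⟨?_, h⟩; rintro rfl; omega
  have hpart : ((univ.erase x₀).filter (fun v => G.degree v = 1)).card +
      ((univ.erase x₀).filter (fun v => ¬ G.degree v = 1)).card = (univ.erase x₀).card :=
    Finset.card_filter_add_card_filter_not _
  have hce : (univ.erase x₀).card = Fintype.card V - 1 := by
    rw [Finset.card_erase_of_mem (mem_univ x₀)]
    simp
  rw [hAeq] at hpart hsplit2
  omega

lemma aux_exists_F {V : Type*} [Fintype V] [DecidableEq V] (G : SimpleGraph V)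
    [DecidableRel G.Adj] (htree : G.IsTree) (q : ℕ)
    (hq : 2 * q = Finset.univ.sup (fun x => G.degree x)) (hV : 0 < Fintype.card V) :
    ∃ F : Finset V, q + 1 ≤ F.card ∧ (∀ x ∈ F, G.degree x ≤ 1) ∧
      ∀ x ∈ F, ∀ y, G.Adj x y → y ∉ F := by
  by_cases hq0 : q = 0
  · subst hq0
    obtain ⟨x₀⟩ : Nonempty V := Fintype.card_pos_iff.mp hV
    refine ⟨{x₀}, by simp, ?_, ?_⟩
    · intro x _
      have h : G.degree x ≤ 2 * 0 := by
        rw [hq]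
        exact Finset.le_sup (f := fun x => G.degree x) (Finset.mem_univ x)
      omega
    · intro x hx y hadj hy
      simp only [Finset.mem_singleton] at hx hy
      subst hx; subst hy
      exact G.loopless.irrefl _ hadj
  · have hq1 : 1 ≤ q := Nat.one_le_iff_ne_zero.mpr hq0
    refine ⟨univ.filter (fun x => G.degree x = 1), ?_, ?_, ?_⟩
    · have := aux_leaf_count G htree hq1 hq
      omega
    · intro x hx
      simp only [Finset.mem_filter] at hx
      omega
    · intro x hx y hadj hy
      simp only [Finset.mem_filter, Finset.mem_univ, true_and] at hx hy
      have hVne : (univ : Finset V).Nonempty := Finset.univ_nonempty_iff.mpr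
        (Fintype.card_pos_iff.mp hV)
      obtain ⟨x₀, -, hx₀⟩ := Finset.exists_mem_eq_sup univ hVne (fun x => G.degree x)
      rw [← hq] at hx₀
      obtain ⟨w⟩ := htree.isConnected.preconnected x x₀
      have := aux_walk_trap G hx hy hadj w (Or.inl rfl)
      rcases this with rfl | rfl <;> omega


set_option maxHeartbeats 1000000 in
/-- let `G^s` be a finite simple symmetric tree (a tree with all edge weights
equal to `1` and vertex weight `m ≡ 1`) and let `2q` be its maximal valency.  Then the
increasingly ordered eigenvalues of `S_{G^s}` satisfy `λ_k(S_{G^s}) ≤ 2` for `k = 1, …, q`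
and `λ_{q+1}(S_{G^s}) ≤ 2(q+1)`. -/
theorem stmt11 {V : Type*} [Fintype V] (G : SimpleGraph V) [DecidableRel G.Adj]
    (htree : G.IsTree)
    (n q : ℕ) (hn : n = Fintype.card V)
    (hq : 2 * q = Finset.univ.sup (fun x => G.degree x))
    (μ : Fin n → ℝ)
    (hμ : IsMonoEigenListing (fun _ : V => (1 : ℝ))
      (opS (fun _ : V => (1 : ℝ)) (fun x y : V => if G.Adj x y then (1 : ℝ) else 0)) μ) :
    (∀ k : Fin n, k.1 < q → μ k ≤ 2) ∧
    (∀ k : Fin n, k.1 = q → μ k ≤ 2 * (q + 1)) := by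
  classical
  have key : ∀ k : Fin n, (k : ℕ) ≤ q → μ k ≤ 2 := by
    intro k hkq
    have hV : 0 < Fintype.card V := by
      have := k.2
      omega
    obtain ⟨F, hcard, hdeg, hnbr⟩ := aux_exists_F G htree q hq hV
    have hb := spectral_bound hn _ (opS_linear _ _) μ hμ F
      (fun x => 2 * (G.degree x : ℝ)) 2
      (fun x hx => by
        have h := hdeg x hx
        show 2 * (G.degree x : ℝ) ≤ 2
        have h' : (G.degree x : ℝ) ≤ 1 := by exact_mod_cast h
        linarith)
      (fun f hsupp x hx => test_formula G F hnbr f hsupp x hx)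
    exact hb k (by omega)
  refine ⟨fun k hk => key k (le_of_lt hk), fun k hk => ?_⟩
  have h1 := key k (le_of_eq hk)
  have h2 : (2 : ℝ) ≤ 2 * ((q : ℝ) + 1) := by
    have : (0 : ℝ) ≤ (q : ℝ) := Nat.cast_nonneg q
    nlinarith
  linarith
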